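/- arXiv:1205.6006 — 2 statements merged into one kernel-verified Lean document; each statement's English description precedes it below -/
import Mathlib

section
/- For every μ in the positive root lattice of G_2, Lusztig's q-analogue of the Kostant partition function satisfies 𝒫(μ;q) = Σ_{T ∈ 𝒯(∞), −wt(T) = μ} q^{|T|} as polynomials in q (both sums are finite). -/
/-- The marginally large tableaux `𝒯(∞)` of type `G_2`, each determined by its
segment data `(ℓ_{1,2}, ℓ_{1,3}, ℓ_{1,0}, ℓ_{1,3̄}, ℓ_{1,2̄}, ℓ_{1,1̄}, ℓ_{2,3})`
with `ℓ_{1,0} ∈ {0,1}`. -/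
structure TabG where
  l12 : ℕ
  l13 : ℕ
  l10 : ℕ
  l13b : ℕ
  l12b : ℕ
  l11b : ℕ
  l23 : ℕ
  l10_le : l10 ≤ 1

/-- The set of positive roots of `G_2`
(`α_1, α_1+α_2, 2α_1+α_2, 3α_1+α_2, 3α_1+2α_2, α_2`), in simple-root
coordinates. -/
def posRootsG : Finset (Fin 2 → ℕ) :=
  {![1, 0], ![1, 1], ![2, 1], ![3, 1], ![3, 2], ![0, 1]}

/-- `Ξ(T)`, extended by zero to all vectors: `ℓ_{1,2}` at `α_1`, `ℓ_{1,3}` at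
`α_1+α_2`, `2ℓ_{1,1̄} + ℓ_{1,0}` at `2α_1+α_2`, `ℓ_{1,3̄}` at `3α_1+α_2`,
`ℓ_{1,2̄}` at `3α_1+2α_2`, and `ℓ_{2,3}` at `α_2`. -/
def XiG (T : TabG) (v : Fin 2 → ℕ) : ℕ :=
  (if v = ![1, 0] then T.l12 else 0) +
    (if v = ![1, 1] then T.l13 else 0) +
    (if v = ![2, 1] then 2 * T.l11b + T.l10 else 0) +
    (if v = ![3, 1] then T.l13b else 0) +
    (if v = ![3, 2] then T.l12b else 0) +
    (if v = ![0, 1] then T.l23 else 0)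

/-- `seg′(T)`: the number of nonzero values among the seven segment data. -/
def segG' (T : TabG) : ℕ :=
  (if T.l12 ≠ 0 then 1 else 0) + (if T.l13 ≠ 0 then 1 else 0) +
    (if T.l10 ≠ 0 then 1 else 0) + (if T.l13b ≠ 0 then 1 else 0) +
    (if T.l12b ≠ 0 then 1 else 0) + (if T.l11b ≠ 0 then 1 else 0) +
    (if T.l23 ≠ 0 then 1 else 0)

/-- `seg(T) = seg′(T) - 1` if the first row contains both a `0`-segment and a
`1̄`-segment, and `seg(T) = seg′(T)` otherwise. -/
def segG (T : TabG) : ℕ :=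
  segG' T - (if T.l10 ≠ 0 ∧ T.l11b ≠ 0 then 1 else 0)

/-- `-wt(T) = Σ_α Ξ(T)(α)·α`, in simple-root coordinates. -/
def negwtG (T : TabG) : Fin 2 → ℕ :=
  ∑ v ∈ posRootsG, XiG T v • v

/-- `|T|`: the number of boxes in the reduced form of `T`, counting each
`1̄`-box with multiplicity `2`. -/
def sizeG (T : TabG) : ℕ :=
  T.l12 + T.l13 + T.l10 + T.l13b + T.l12b + 2 * T.l11b + T.l23

abbrev RG := {v : Fin 2 → ℕ // v ∈ posRootsG}

def ra : RG := ⟨![1,0], by decide⟩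
def rb : RG := ⟨![1,1], by decide⟩
def rc : RG := ⟨![2,1], by decide⟩
def rd : RG := ⟨![3,1], by decide⟩
def re : RG := ⟨![3,2], by decide⟩
def rf : RG := ⟨![0,1], by decide⟩

def e6 : Fin 6 → RG := ![ra, rb, rc, rd, re, rf]

lemma e6_bij : Function.Bijective e6 := by decide

lemma sum_R {M : Type*} [AddCommMonoid M] (F : RG → M) :
    ∑ α : RG, F α = F ra + F rb + F rc + F rd + F re + F rf := by
  rw [← Equiv.sum_comp (Equiv.ofBijective e6 e6_bij) F]
  simp only [Equiv.ofBijective_apply, Fin.sum_univ_six, add_assoc]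
  rfl

lemma XiG_a (T : TabG) : XiG T ![1,0] = T.l12 := by
  rw [XiG]; norm_num [show (![1,0] : Fin 2 → ℕ) ≠ ![1,1] from by decide,
    show (![1,0] : Fin 2 → ℕ) ≠ ![2,1] from by decide,
    show (![1,0] : Fin 2 → ℕ) ≠ ![3,1] from by decide,
    show (![1,0] : Fin 2 → ℕ) ≠ ![3,2] from by decide,
    show (![1,0] : Fin 2 → ℕ) ≠ ![0,1] from by decide]
lemma XiG_b (T : TabG) : XiG T ![1,1] = T.l13 := by
  rw [XiG]; norm_num [show (![1,1] : Fin 2 → ℕ) ≠ ![1,0] from by decide,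
    show (![1,1] : Fin 2 → ℕ) ≠ ![2,1] from by decide,
    show (![1,1] : Fin 2 → ℕ) ≠ ![3,1] from by decide,
    show (![1,1] : Fin 2 → ℕ) ≠ ![3,2] from by decide,
    show (![1,1] : Fin 2 → ℕ) ≠ ![0,1] from by decide]
lemma XiG_c (T : TabG) : XiG T ![2,1] = 2 * T.l11b + T.l10 := by
  rw [XiG]; norm_num [show (![2,1] : Fin 2 → ℕ) ≠ ![1,0] from by decide,
    show (![2,1] : Fin 2 → ℕ) ≠ ![1,1] from by decide,
    show (![2,1] : Fin 2 → ℕ) ≠ ![3,1] from by decide,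
    show (![2,1] : Fin 2 → ℕ) ≠ ![3,2] from by decide,
    show (![2,1] : Fin 2 → ℕ) ≠ ![0,1] from by decide]
lemma XiG_d (T : TabG) : XiG T ![3,1] = T.l13b := by
  rw [XiG]; norm_num [show (![3,1] : Fin 2 → ℕ) ≠ ![1,0] from by decide,
    show (![3,1] : Fin 2 → ℕ) ≠ ![1,1] from by decide,
    show (![3,1] : Fin 2 → ℕ) ≠ ![2,1] from by decide,
    show (![3,1] : Fin 2 → ℕ) ≠ ![3,2] from by decide,
    show (![3,1] : Fin 2 → ℕ) ≠ ![0,1] from by decide]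
lemma XiG_e (T : TabG) : XiG T ![3,2] = T.l12b := by
  rw [XiG]; norm_num [show (![3,2] : Fin 2 → ℕ) ≠ ![1,0] from by decide,
    show (![3,2] : Fin 2 → ℕ) ≠ ![1,1] from by decide,
    show (![3,2] : Fin 2 → ℕ) ≠ ![2,1] from by decide,
    show (![3,2] : Fin 2 → ℕ) ≠ ![3,1] from by decide,
    show (![3,2] : Fin 2 → ℕ) ≠ ![0,1] from by decide]
lemma XiG_f (T : TabG) : XiG T ![0,1] = T.l23 := by
  rw [XiG]; norm_num [show (![0,1] : Fin 2 → ℕ) ≠ ![1,0] from by decide,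
    show (![0,1] : Fin 2 → ℕ) ≠ ![1,1] from by decide,
    show (![0,1] : Fin 2 → ℕ) ≠ ![2,1] from by decide,
    show (![0,1] : Fin 2 → ℕ) ≠ ![3,1] from by decide,
    show (![0,1] : Fin 2 → ℕ) ≠ ![3,2] from by decide]

def toC (T : TabG) : RG → ℕ := fun α => XiG T α.1

def toTab (c : RG → ℕ) : TabG where
  l12 := c ra
  l13 := c rb
  l10 := c rc % 2
  l13b := c rd
  l12b := c re
  l11b := c rc / 2
  l23 := c rf
  l10_le := by omega

lemma TabG_ext {S T : TabG} (h1 : S.l12 = T.l12) (h2 : S.l13 = T.l13)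
    (h3 : S.l10 = T.l10) (h4 : S.l13b = T.l13b) (h5 : S.l12b = T.l12b)
    (h6 : S.l11b = T.l11b) (h7 : S.l23 = T.l23) : S = T := by
  cases S; cases T; simp_all

lemma toC_toTab (c : RG → ℕ) : toC (toTab c) = c := by
  funext α
  obtain ⟨i, rfl⟩ := e6_bij.surjective α
  fin_cases i
  · show XiG (toTab c) ![1,0] = c ra; rw [XiG_a]; rfl
  · show XiG (toTab c) ![1,1] = c rb; rw [XiG_b]; rfl
  · show XiG (toTab c) ![2,1] = c rc; rw [XiG_c]
    show 2 * (c rc / 2) + c rc % 2 = c rc; omega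
  · show XiG (toTab c) ![3,1] = c rd; rw [XiG_d]; rfl
  · show XiG (toTab c) ![3,2] = c re; rw [XiG_e]; rfl
  · show XiG (toTab c) ![0,1] = c rf; rw [XiG_f]; rfl

lemma toTab_toC (T : TabG) : toTab (toC T) = T := by
  have h10 := T.l10_le
  refine TabG_ext ?_ ?_ ?_ ?_ ?_ ?_ ?_
  · show XiG T ![1,0] = T.l12; rw [XiG_a]
  · show XiG T ![1,1] = T.l13; rw [XiG_b]
  · show XiG T ![2,1] % 2 = T.l10; rw [XiG_c]; omega
  · show XiG T ![3,1] = T.l13b; rw [XiG_d]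
  · show XiG T ![3,2] = T.l12b; rw [XiG_e]
  · show XiG T ![2,1] / 2 = T.l11b; rw [XiG_c]; omega
  · show XiG T ![0,1] = T.l23; rw [XiG_f]

lemma negwt_toC (T : TabG) : (∑ α : RG, toC T α • α.1) = negwtG T := by
  rw [negwtG, ← Finset.sum_coe_sort posRootsG (fun v => XiG T v • v)]
  rfl

lemma size_toC (T : TabG) : (∑ α : RG, toC T α) = sizeG T := by
  rw [sum_R (toC T)]
  show XiG T ![1,0] + XiG T ![1,1] + XiG T ![2,1] + XiG T ![3,1] + XiG T ![3,2]
      + XiG T ![0,1] = sizeG T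
  rw [XiG_a, XiG_b, XiG_c, XiG_d, XiG_e, XiG_f, sizeG]; omega

/-- for every `μ` in the positive root lattice of `G_2`,
Lusztig's `q`-analogue of the Kostant partition function satisfies
`𝒫(μ;q) = Σ_{T ∈ 𝒯(∞), -wt(T) = μ} q^{|T|}`, stated coefficientwise in `q`. -/
theorem stmt14 :
    ∀ μ : Fin 2 → ℕ, ∀ d : ℕ,
      Nat.card {c : {v // v ∈ posRootsG} → ℕ //
          (∑ α : {v // v ∈ posRootsG}, c α • α.1) = μ ∧
          (∑ α : {v // v ∈ posRootsG}, c α) = d}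
      = Nat.card {T : TabG // negwtG T = μ ∧ sizeG T = d} := by
  intro μ d
  refine Nat.card_congr ⟨fun x => ⟨toTab x.1, ?_, ?_⟩, fun y => ⟨toC y.1, ?_, ?_⟩,
    fun x => Subtype.ext (toC_toTab x.1), fun y => Subtype.ext (toTab_toC y.1)⟩
  · rw [← negwt_toC, toC_toTab]; exact x.2.1
  · rw [← size_toC, toC_toTab]; exact x.2.2
  · rw [negwt_toC]; exact y.2.1
  · rw [size_toC]; exact y.2.2
end

section
/- For all dominant integral weights λ, μ of type A_r, the Kostka–Foulkes polynomial satisfies K_{λ,μ}(q) = Σ_{w ∈ W} (−1)^{ℓ(w)} Σ_{T ∈ 𝒯(∞), −wt(T) = w(λ+ρ)−(μ+ρ)} q^{|T|}, where the inner sum is over the finitely many T ∈ 𝒯(∞) with −wt(T) = w(λ+ρ)−(μ+ρ) (and is empty if w(λ+ρ)−(μ+ρ) does not lie in the positive root lattice). -/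
/-- Marginally large semistandard Young tableaux of type `A_r`, on the alphabet
`{1 < 2 < ⋯ < r+1}`: exactly `r` rows (given as lists of entries), rows weakly
increasing, columns strictly increasing, first column `1, 2, …, r`, and the
number of `i`-entries in row `i` exceeds the number of boxes in row `i+1` by
exactly one. -/
structure TabA (r : ℕ) where
  row : Fin r → List ℕ
  entry_mem : ∀ i : Fin r, ∀ e ∈ row i, 1 ≤ e ∧ e ≤ r + 1
  row_weak : ∀ i : Fin r, (row i).Chain' (· ≤ ·)
  first_col : ∀ i : Fin r, (row i).head? = some (i.1 + 1)
  col_le : ∀ i : Fin r, ∀ h : i.1 + 1 < r,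
    (row ⟨i.1 + 1, h⟩).length ≤ (row i).length
  col_strict : ∀ i : Fin r, ∀ h : i.1 + 1 < r, ∀ j < (row ⟨i.1 + 1, h⟩).length,
    (row i).getD j 0 < (row ⟨i.1 + 1, h⟩).getD j 0
  marg_large : ∀ i : Fin r, (row i).count (i.1 + 1) =
    (if h : i.1 + 1 < r then (row ⟨i.1 + 1, h⟩).length else 0) + 1

/-- `ℓ_{i,k}(T)`: the number of `k`-entries in row `i` (rows of `T` are indexed by
`Fin r`, row `i : Fin r` having label `i+1`). -/
def ellA (r : ℕ) (T : TabA r) (i : Fin r) (k : ℕ) : ℕ := (T.row i).count k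

/-- `seg(T)`: the number of pairs `(i,k)` with `1 ≤ i < k ≤ r+1` and `ℓ_{i,k}(T) > 0`. -/
def segA (r : ℕ) (T : TabA r) : ℕ :=
  ∑ i : Fin r, ((Finset.Icc (i.1 + 2) (r + 1)).filter fun k => ellA r T i k ≠ 0).card

/-- The positive root `β_{i,k} = α_i + ⋯ + α_k` of `A_r`, as a vector of
coordinates in the simple roots. -/
def betaA (r : ℕ) (i k : ℕ) : Fin r → ℕ :=
  fun j => if i ≤ j.1 + 1 ∧ j.1 + 1 ≤ k then 1 else 0

/-- The set of positive roots `{β_{i,k} : 1 ≤ i ≤ k ≤ r}` of `A_r`. -/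
def posRootsA (r : ℕ) : Finset (Fin r → ℕ) :=
  ((Finset.Icc 1 r ×ˢ Finset.Icc 1 r).filter fun p => p.1 ≤ p.2).image
    fun p => betaA r p.1 p.2

/-- `Ξ(T)`, extended by zero to all vectors: `Ξ(T)(β_{i,k}) = ℓ_{i,k+1}(T)`. -/
def XiA (r : ℕ) (T : TabA r) (v : Fin r → ℕ) : ℕ :=
  ∑ i : Fin r, ∑ k ∈ Finset.Icc (i.1 + 1) r,
    if v = betaA r (i.1 + 1) k then ellA r T i (k + 1) else 0

/-- `-wt(T) = Σ_{1≤i<k≤r+1} ℓ_{i,k}(T)·(α_i + ⋯ + α_{k-1})`, in simple-root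
coordinates. -/
def negwtA (r : ℕ) (T : TabA r) : Fin r → ℕ :=
  ∑ i : Fin r, ∑ k ∈ Finset.Icc (i.1 + 2) (r + 1),
    ellA r T i k • betaA r (i.1 + 1) (k - 1)

/-- `wt(T)` as an integer vector in simple-root coordinates. -/
def wtA (r : ℕ) (T : TabA r) : Fin r → ℤ :=
  fun j => -(negwtA r T j : ℤ)

/-- `|T|`: the number of boxes in the reduced form of `T`. -/
def sizeA (r : ℕ) (T : TabA r) : ℕ :=
  ∑ i : Fin r, ∑ k ∈ Finset.Icc (i.1 + 2) (r + 1), ellA r T i k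

/-- The positive root `β_{i,k-1} = α_i + ⋯ + α_{k-1} = ε_i - ε_k` of `A_r`
(for `1 ≤ i < k ≤ r+1`), in the standard `ε`-coordinates on `ℤ^{r+1}`. -/
def epsRootA (r : ℕ) (i k : ℕ) : Fin (r + 1) → ℤ :=
  fun j => if j.1 + 1 = i then 1 else if j.1 + 1 = k then -1 else 0

/-- The set of positive roots `{ε_i - ε_k : 1 ≤ i < k ≤ r+1}` of `A_r` in
`ε`-coordinates. -/
def posRootsEpsA (r : ℕ) : Finset (Fin (r + 1) → ℤ) :=
  ((Finset.Icc 1 (r + 1) ×ˢ Finset.Icc 1 (r + 1)).filter fun p => p.1 < p.2).image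
    fun p => epsRootA r p.1 p.2

/-- `-wt(T) = Σ_{1≤i<k≤r+1} ℓ_{i,k}(T)·(ε_i - ε_k)` in `ε`-coordinates. -/
def negwtEpsA (r : ℕ) (T : TabA r) : Fin (r + 1) → ℤ :=
  ∑ i : Fin r, ∑ k ∈ Finset.Icc (i.1 + 2) (r + 1),
    ellA r T i k • epsRootA r (i.1 + 1) k

/-- The Weyl vector `ρ` of `A_r`, in `ε`-coordinates (normalized to the
integral representative `(r, r-1, …, 1, 0)`). -/
def rhoA (r : ℕ) : Fin (r + 1) → ℤ := fun j => (r : ℤ) - (j.1 : ℤ)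

/-- The Coxeter length of `w ∈ W = S_{r+1}`, i.e. its number of inversions. -/
def lenA (r : ℕ) (w : Equiv.Perm (Fin (r + 1))) : ℕ :=
  ((Finset.univ : Finset (Fin (r + 1) × Fin (r + 1))).filter
    fun p => p.1 < p.2 ∧ w p.2 < w p.1).card

/-- The weight `w(λ+ρ) - (μ+ρ)` in `ε`-coordinates, where `W = S_{r+1}` acts
on `ℤ^{r+1}` by permuting coordinates. -/
def shiftA (r : ℕ) (w : Equiv.Perm (Fin (r + 1))) (lam mu : Fin (r + 1) → ℤ) :
    Fin (r + 1) → ℤ :=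
  fun j => (lam (w.symm j) + rhoA r (w.symm j)) - (mu j + rhoA r j)


/-- concatenation of constant blocks with increasing values -/
def blocksL (f : ℕ → ℕ) (base n : ℕ) : List ℕ :=
  ((List.range n).map fun t => List.replicate (f t) (base + t)).flatten

lemma blocksL_succ (f : ℕ → ℕ) (base n : ℕ) :
    blocksL f base (n+1) = blocksL f base n ++ List.replicate (f n) (base + n) := by
  simp [blocksL, List.range_succ]

lemma blocksL_length (f : ℕ → ℕ) (base n : ℕ) :
    (blocksL f base n).length = ∑ t ∈ Finset.range n, f t := by
  induction n with
  | zero => simp [blocksL]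
  | succ n ih => rw [blocksL_succ, List.length_append, ih, Finset.sum_range_succ]; simp

lemma blocksL_mem (f : ℕ → ℕ) (base n : ℕ) {x : ℕ} (hx : x ∈ blocksL f base n) :
    base ≤ x ∧ x < base + n := by
  induction n with
  | zero => simp [blocksL] at hx
  | succ n ih =>
    rw [blocksL_succ, List.mem_append] at hx
    rcases hx with h | h
    · rcases ih h with ⟨h1, h2⟩; exact ⟨h1, by omega⟩
    · rcases List.eq_of_mem_replicate h with rfl; omega

lemma blocksL_sorted (f : ℕ → ℕ) (base n : ℕ) :
    (blocksL f base n).Pairwise (· ≤ ·) := by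
  induction n with
  | zero => simp [blocksL]
  | succ n ih =>
    rw [blocksL_succ, List.pairwise_append]
    refine ⟨ih, List.pairwise_replicate.2 (by simp), ?_⟩
    intro a ha b hb
    rcases List.eq_of_mem_replicate hb with rfl
    exact le_of_lt (blocksL_mem f base n ha).2

lemma blocksL_count (f : ℕ → ℕ) (base n k : ℕ) :
    (blocksL f base n).count k =
      if base ≤ k ∧ k < base + n then f (k - base) else 0 := by
  induction n with
  | zero =>
    have h : ¬ (base ≤ k ∧ k < base) := by omega
    simp [blocksL, h]
  | succ n ih =>
    rw [blocksL_succ, List.count_append, ih, List.count_replicate]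
    by_cases h1 : k = base + n
    · subst h1
      have h2 : ¬ (base + n ≤ base ∧ (False : Prop)) := by simp
      have h3 : ¬ ((base:ℕ) + n < base + n) := by omega
      have h4 : base ≤ base + n ∧ base + n < base + (n+1) := by omega
      simp [h3, h4, Nat.add_sub_cancel_left]
    · have hb : ((base + n : ℕ) == k) = false := by
        rw [beq_eq_false_iff_ne]; omega
      rw [hb]
      simp only [Bool.false_eq_true, if_false, Nat.add_zero]
      by_cases h2 : base ≤ k ∧ k < base + n
      · have h3 : base ≤ k ∧ k < base + (n+1) := by omega
        simp [h2, h3]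
      · have h3 : ¬ (base ≤ k ∧ k < base + (n+1)) := by omega
        simp [h2, h3]

section Build
variable (r : ℕ)

/-- `g` extended to natural row indices. -/
def gnatA (g : Fin r → ℕ → ℕ) (j k : ℕ) : ℕ := if h : j < r then g ⟨j, h⟩ k else 0

/-- sum of multiplicities in row `j` beyond the leading entries -/
def SgA (g : Fin r → ℕ → ℕ) (j : ℕ) : ℕ := ∑ k ∈ Finset.Icc (j + 2) (r + 1), gnatA r g j k

/-- intended length of row `m` (0-indexed) -/
def LgA (g : Fin r → ℕ → ℕ) (m : ℕ) : ℕ := ∑ j ∈ Finset.Ico m r, (SgA r g j + 1)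

lemma LgA_of_ge (g : Fin r → ℕ → ℕ) (m : ℕ) (h : r ≤ m) : LgA r g m = 0 := by
  rw [LgA, Finset.Ico_eq_empty (by omega), Finset.sum_empty]

lemma LgA_succ (g : Fin r → ℕ → ℕ) (m : ℕ) (h : m < r) :
    LgA r g m = SgA r g m + 1 + LgA r g (m + 1) := by
  rw [LgA, Finset.sum_eq_sum_Ico_succ_bot h]; rfl

/-- the row of the built tableau -/
def rowOfA (g : Fin r → ℕ → ℕ) (i : Fin r) : List ℕ :=
  List.replicate (LgA r g (i.1 + 1) + 1) (i.1 + 1) ++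
    blocksL (fun t => gnatA r g i.1 (i.1 + 2 + t)) (i.1 + 2) (r - i.1)

lemma SgA_eq_range (g : Fin r → ℕ → ℕ) (i : Fin r) :
    SgA r g i.1 = ∑ t ∈ Finset.range (r - i.1), gnatA r g i.1 (i.1 + 2 + t) := by
  rw [SgA, ← Finset.Ico_add_one_right_eq_Icc, Finset.sum_Ico_eq_sum_range]
  have : r + 1 + 1 - (i.1 + 2) = r - i.1 := by omega
  rw [this]

lemma rowOfA_length (g : Fin r → ℕ → ℕ) (i : Fin r) :
    (rowOfA r g i).length = LgA r g i.1 := by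
  rw [rowOfA, List.length_append, List.length_replicate, blocksL_length,
    ← SgA_eq_range, LgA_succ r g i.1 i.2]
  omega

lemma rowOfA_count_self (g : Fin r → ℕ → ℕ) (i : Fin r) :
    (rowOfA r g i).count (i.1 + 1) = LgA r g (i.1 + 1) + 1 := by
  rw [rowOfA, List.count_append, List.count_replicate, blocksL_count]
  have h1 : ¬ (i.1 + 2 ≤ i.1 + 1 ∧ i.1 + 1 < i.1 + 2 + (r - i.1)) := by omega
  simp [h1]

lemma rowOfA_count (g : Fin r → ℕ → ℕ) (i : Fin r) (k : ℕ)
    (hk : i.1 + 2 ≤ k ∧ k ≤ r + 1) :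
    (rowOfA r g i).count k = gnatA r g i.1 k := by
  rw [rowOfA, List.count_append, List.count_replicate, blocksL_count]
  have h1 : ((i.1 + 1 : ℕ) == k) = false := by rw [beq_eq_false_iff_ne]; omega
  have h2 : i.1 + 2 ≤ k ∧ k < i.1 + 2 + (r - i.1) := by omega
  rw [h1]
  have h3 : i.1 + 2 + (k - (i.1 + 2)) = k := by omega
  simp only [Bool.false_eq_true, if_false, h2, if_true, and_self, Nat.zero_add]
  rw [h3]

lemma rowOfA_count_zero (g : Fin r → ℕ → ℕ) (i : Fin r) (k : ℕ)
    (hk : ¬ (i.1 + 1 ≤ k ∧ k ≤ r + 1)) :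
    (rowOfA r g i).count k = 0 := by
  rw [rowOfA, List.count_append, List.count_replicate, blocksL_count]
  have h1 : ((i.1 + 1 : ℕ) == k) = false := by rw [beq_eq_false_iff_ne]; omega
  have h2 : ¬ (i.1 + 2 ≤ k ∧ k < i.1 + 2 + (r - i.1)) := by omega
  rw [h1]
  simp [h2]

lemma rowOfA_mem (g : Fin r → ℕ → ℕ) (i : Fin r) {x : ℕ} (hx : x ∈ rowOfA r g i) :
    i.1 + 1 ≤ x ∧ x ≤ r + 1 := by
  rw [rowOfA, List.mem_append] at hx
  rcases hx with h | h
  · rcases List.eq_of_mem_replicate h with rfl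
    constructor
    · omega
    · have := i.2; omega
  · have := blocksL_mem _ _ _ h
    have hi := i.2
    omega

lemma rowOfA_sorted (g : Fin r → ℕ → ℕ) (i : Fin r) :
    (rowOfA r g i).Pairwise (· ≤ ·) := by
  rw [rowOfA, List.pairwise_append]
  refine ⟨List.pairwise_replicate.2 (by simp), blocksL_sorted _ _ _, ?_⟩
  intro a ha b hb
  rcases List.eq_of_mem_replicate ha with rfl
  exact le_of_lt (lt_of_lt_of_le (by omega) (blocksL_mem _ _ _ hb).1)

/-- the tableau built from multiplicities `g` -/
def buildTabA (g : Fin r → ℕ → ℕ) : TabA r where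
  row := rowOfA r g
  entry_mem := by
    intro i e he
    have := rowOfA_mem r g i he
    omega
  row_weak := by
    intro i
    refine List.isChain_iff_pairwise.2 ?_
    exact rowOfA_sorted r g i
  first_col := by
    intro i
    rw [rowOfA, List.replicate_succ, List.cons_append, List.head?_cons]
  col_le := by
    intro i h
    rw [rowOfA_length, rowOfA_length]
    simp only
    rw [LgA_succ r g i.1 i.2]
    omega
  col_strict := by
    intro i h j hj
    rw [rowOfA_length] at hj
    simp only at hj ⊢
    have hjlt : j < (List.replicate (LgA r g (i.1 + 1) + 1) (i.1 + 1)).length := by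
      rw [List.length_replicate]; omega
    have h1 : (rowOfA r g i).getD j 0 = i.1 + 1 := by
      rw [rowOfA, List.getD_append _ _ _ _ hjlt, List.getD_eq_getElem _ _ hjlt,
        List.getElem_replicate]
    have hj2 : j < (rowOfA r g ⟨i.1 + 1, h⟩).length := by
      rw [rowOfA_length]; exact hj
    have h2 : (rowOfA r g ⟨i.1 + 1, h⟩).getD j 0 ∈ rowOfA r g ⟨i.1 + 1, h⟩ := by
      rw [List.getD_eq_getElem _ _ hj2]; exact List.getElem_mem _
    have := (rowOfA_mem r g ⟨i.1 + 1, h⟩ h2).1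
    have hval : (⟨i.1 + 1, h⟩ : Fin r).1 = i.1 + 1 := rfl
    rw [h1]
    omega
  marg_large := by
    intro i
    rw [rowOfA_count_self]
    by_cases h : i.1 + 1 < r
    · rw [dif_pos h, rowOfA_length]
    · rw [dif_neg h, LgA_of_ge r g _ (by omega)]
lemma TabA_ext {T T' : TabA r} (h : T.row = T'.row) : T = T' := by
  cases T; cases T'; cases h; rfl

lemma tab_sorted (T : TabA r) (i : Fin r) : (T.row i).Pairwise (· ≤ ·) :=
  List.isChain_iff_pairwise.1 (T.row_weak i)

lemma tab_mem_ge (T : TabA r) (i : Fin r) {x : ℕ} (hx : x ∈ T.row i) :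
    i.1 + 1 ≤ x := by
  have hh := T.first_col i
  cases hl : T.row i with
  | nil => rw [hl] at hh; simp at hh
  | cons a t =>
      rw [hl] at hh hx
      rw [List.head?_cons, Option.some_inj] at hh
      subst hh
      have hs := tab_sorted r T i
      rw [hl, List.pairwise_cons] at hs
      rcases List.mem_cons.1 hx with rfl | hx'
      · exact le_refl _
      · exact hs.1 x hx'

lemma tab_count_zero (T : TabA r) (i : Fin r) (k : ℕ)
    (hk : ¬ (i.1 + 1 ≤ k ∧ k ≤ r + 1)) : (T.row i).count k = 0 := by
  rw [List.count_eq_zero]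
  intro hmem
  exact hk ⟨tab_mem_ge r T i hmem, (T.entry_mem i k hmem).2⟩

lemma tab_length_eq (T : TabA r) (i : Fin r) :
    (T.row i).length = (T.row i).count (i.1 + 1) + SgA r (fun i k => ellA r T i k) i.1 := by
  have hsub : (T.row i).toFinset ⊆ Finset.Icc (i.1 + 1) (r + 1) := by
    intro x hx
    rw [List.mem_toFinset] at hx
    rw [Finset.mem_Icc]
    exact ⟨tab_mem_ge r T i hx, (T.entry_mem i x hx).2⟩
  have h1 : (T.row i).length = ∑ k ∈ Finset.Icc (i.1 + 1) (r + 1), (T.row i).count k := by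
    have h0 : ∑ a ∈ (T.row i).toFinset, (T.row i).count a = (T.row i).length := by
      simpa using Multiset.toFinset_sum_count_eq (↑(T.row i) : Multiset ℕ)
    exact h0.symm.trans (Finset.sum_subset hsub (fun x _ hx =>
      List.count_eq_zero.2 fun hmem => hx (List.mem_toFinset.2 hmem)))
  rw [h1, ← Finset.Ico_add_one_right_eq_Icc, Finset.sum_eq_sum_Ico_succ_bot (by omega : i.1 + 1 < r + 1 + 1),
    Finset.Ico_add_one_right_eq_Icc]
  congr 1
  rw [SgA]
  refine Finset.sum_congr rfl ?_
  intro k hk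
  rw [Finset.mem_Icc] at hk
  rw [gnatA, dif_pos i.2]
  rfl

lemma tab_length (T : TabA r) : ∀ n : ℕ, ∀ i : Fin r, r - i.1 ≤ n →
    (T.row i).length = LgA r (fun i k => ellA r T i k) i.1 := by
  intro n
  induction n with
  | zero => intro i hi; exact absurd hi (by have := i.2; omega)
  | succ n ih =>
    intro i hi
    rw [tab_length_eq, T.marg_large i, LgA_succ r _ i.1 i.2]
    by_cases h : i.1 + 1 < r
    · rw [dif_pos h, ih ⟨i.1 + 1, h⟩ (by simp; omega)]
      simp only
      omega
    · rw [dif_neg h, LgA_of_ge r _ _ (by omega)]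
      omega

/-- rebuilding a tableau from its multiplicities gives it back -/
lemma build_eq (T : TabA r) : buildTabA r (fun i k => ellA r T i k) = T := by
  apply TabA_ext
  funext i
  set g : Fin r → ℕ → ℕ := fun i k => ellA r T i k with hg
  have hsort1 : ((buildTabA r g).row i).Pairwise (· ≤ ·) := rowOfA_sorted r g i
  have hsort2 : (T.row i).Pairwise (· ≤ ·) := tab_sorted r T i
  refine List.Perm.eq_of_pairwise' hsort1 hsort2 (List.perm_iff_count.2 ?_)
  intro k
  show (rowOfA r g i).count k = (T.row i).count k
  by_cases h1 : k = i.1 + 1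
  · subst h1
    rw [rowOfA_count_self, T.marg_large i]
    congr 1
    by_cases h : i.1 + 1 < r
    · rw [dif_pos h, tab_length r T (r - (i.1+1)) ⟨i.1+1, h⟩ (by simp)]
    · rw [dif_neg h, LgA_of_ge r _ _ (by omega)]
  · by_cases h2 : i.1 + 2 ≤ k ∧ k ≤ r + 1
    · rw [rowOfA_count r g i k h2, gnatA, dif_pos i.2]
      rfl
    · rw [rowOfA_count_zero r g i k (by omega), tab_count_zero r T i k (by omega)]

lemma blocksL_congr {f f' : ℕ → ℕ} (base : ℕ) : ∀ n, (∀ t < n, f t = f' t) →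
    blocksL f base n = blocksL f' base n := by
  intro n
  induction n with
  | zero => intro; rfl
  | succ n ih =>
    intro h
    rw [blocksL_succ, blocksL_succ, ih (fun t ht => h t (by omega)), h n (by omega)]

lemma buildTabA_congr {g g' : Fin r → ℕ → ℕ}
    (h : ∀ i : Fin r, ∀ k, i.1 + 2 ≤ k → k ≤ r + 1 → g i k = g' i k) :
    buildTabA r g = buildTabA r g' := by
  have hgnat : ∀ j k, j + 2 ≤ k → k ≤ r + 1 → gnatA r g j k = gnatA r g' j k := by
    intro j k hk1 hk2
    rw [gnatA, gnatA]
    by_cases hj : j < r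
    · rw [dif_pos hj, dif_pos hj, h ⟨j, hj⟩ k hk1 hk2]
    · rw [dif_neg hj, dif_neg hj]
  have hS : ∀ j, SgA r g j = SgA r g' j := by
    intro j
    refine Finset.sum_congr rfl ?_
    intro k hk
    rw [Finset.mem_Icc] at hk
    exact hgnat j k hk.1 hk.2
  have hL : ∀ m, LgA r g m = LgA r g' m := by
    intro m
    exact Finset.sum_congr rfl fun j _ => by rw [hS]
  apply TabA_ext
  funext i
  show rowOfA r g i = rowOfA r g' i
  rw [rowOfA, rowOfA, hL]
  congr 1
  refine blocksL_congr _ _ ?_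
  intro t ht
  exact hgnat i.1 (i.1 + 2 + t) (by omega) (by omega)

lemma ell_build (g : Fin r → ℕ → ℕ) (i : Fin r) (k : ℕ)
    (h1 : i.1 + 2 ≤ k) (h2 : k ≤ r + 1) :
    ellA r (buildTabA r g) i k = g i k := by
  show (rowOfA r g i).count k = g i k
  rw [rowOfA_count r g i k ⟨h1, h2⟩, gnatA, dif_pos i.2]
lemma mem_eps (i : Fin r) (k : ℕ) (h1 : i.1 + 2 ≤ k) (h2 : k ≤ r + 1) :
    epsRootA r (i.1 + 1) k ∈ posRootsEpsA r := by
  rw [posRootsEpsA, Finset.mem_image]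
  refine ⟨(i.1 + 1, k), ?_, rfl⟩
  rw [Finset.mem_filter, Finset.mem_product, Finset.mem_Icc, Finset.mem_Icc]
  have := i.2
  refine ⟨⟨⟨by omega, by omega⟩, ⟨by omega, by omega⟩⟩, by omega⟩

lemma eps_inj (a b a' b' : ℕ) (ha : 1 ≤ a) (hab : a < b) (hb : b ≤ r + 1)
    (ha' : 1 ≤ a') (hab' : a' < b') (hb' : b' ≤ r + 1)
    (h : epsRootA r a b = epsRootA r a' b') : a = a' ∧ b = b' := by
  have h1 := congrFun h ⟨a - 1, by omega⟩
  have h2 := congrFun h ⟨b - 1, by omega⟩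
  simp only [epsRootA, Fin.val_mk] at h1 h2
  rw [show a - 1 + 1 = a by omega] at h1
  rw [show b - 1 + 1 = b by omega] at h2
  split_ifs at h1 h2 <;> omega

lemma mem_eps_exists {v : Fin (r + 1) → ℤ} (hv : v ∈ posRootsEpsA r) :
    ∃ (i0 : Fin r) (b : ℕ), i0.1 + 2 ≤ b ∧ b ≤ r + 1 ∧ v = epsRootA r (i0.1 + 1) b := by
  rw [posRootsEpsA, Finset.mem_image] at hv
  obtain ⟨p, hp, rfl⟩ := hv
  rw [Finset.mem_filter, Finset.mem_product, Finset.mem_Icc, Finset.mem_Icc] at hp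
  have h1 : 1 ≤ p.1 := hp.1.1.1
  have h2 : p.1 < p.2 := hp.2
  have h3 : p.2 ≤ r + 1 := hp.1.2.2
  refine ⟨⟨p.1 - 1, by omega⟩, p.2, ?_, h3, ?_⟩
  · exact (show p.1 - 1 + 2 ≤ p.2 by omega)
  · show epsRootA r p.1 p.2 = epsRootA r (p.1 - 1 + 1) p.2
    rw [show p.1 - 1 + 1 = p.1 by omega]
lemma sum_pos_roots {M : Type*} [AddCommMonoid M] (G : (Fin (r + 1) → ℤ) → M) :
    (∑ α : {v // v ∈ posRootsEpsA r}, G α.1)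
      = ∑ i : Fin r, ∑ k ∈ Finset.Icc (i.1 + 2) (r + 1), G (epsRootA r (i.1 + 1) k) := by
  rw [Finset.sum_coe_sort (posRootsEpsA r) G, posRootsEpsA]
  rw [Finset.sum_image (f := G)]
  · rw [Finset.sum_sigma']
    refine (Finset.sum_bij (fun x _ => ((x.1.1 + 1 : ℕ), x.2)) ?_ ?_ ?_ ?_).symm
    · intro x hx
      rw [Finset.mem_sigma, Finset.mem_Icc] at hx
      rw [Finset.mem_filter, Finset.mem_product, Finset.mem_Icc, Finset.mem_Icc]
      have := x.1.2
      have := hx.2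
      refine ⟨⟨⟨by omega, by omega⟩, ⟨by omega, by omega⟩⟩, by omega⟩
    · intro x hx y hy hxy
      rw [Finset.mem_sigma, Finset.mem_Icc] at hx hy
      rw [Prod.mk.injEq] at hxy
      have h1 : x.1 = y.1 := Fin.ext (by omega)
      exact Sigma.ext h1 (heq_of_eq hxy.2)
    · intro p hp
      rw [Finset.mem_filter, Finset.mem_product, Finset.mem_Icc, Finset.mem_Icc] at hp
      refine ⟨⟨⟨p.1 - 1, by omega⟩, p.2⟩, ?_, ?_⟩
      · rw [Finset.mem_sigma, Finset.mem_Icc]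
        exact ⟨Finset.mem_univ _, by simp; omega⟩
      · simp only
        rw [show p.1 - 1 + 1 = p.1 by omega]
    · intro x hx
      rfl
  · intro p hp q hq hpq
    rw [Finset.mem_coe, Finset.mem_filter, Finset.mem_product, Finset.mem_Icc, Finset.mem_Icc] at hp hq
    have := eps_inj r p.1 p.2 q.1 q.2 hp.1.1.1 hp.2 hp.1.2.2 hq.1.1.1 hq.2 hq.1.2.2 hpq
    exact Prod.ext this.1 this.2

lemma sum_single_eps {M : Type*} [AddCommMonoid M] (x : Fin r → ℕ → M)
    (i0 : Fin r) (b : ℕ) (hab : i0.1 + 2 ≤ b) (hb : b ≤ r + 1) :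
    (∑ i : Fin r, ∑ k ∈ Finset.Icc (i.1 + 2) (r + 1),
        if epsRootA r (i0.1 + 1) b = epsRootA r (i.1 + 1) k then x i k else 0)
      = x i0 b := by
  rw [Finset.sum_eq_single i0]
  · rw [Finset.sum_eq_single_of_mem b (Finset.mem_Icc.mpr ⟨hab, hb⟩)]
    · rw [if_pos rfl]
    · intro k hk hkb
      rw [Finset.mem_Icc] at hk
      rw [if_neg]
      intro hc
      have := eps_inj r (i0.1 + 1) b (i0.1 + 1) k (by omega) (by omega) hb
        (by omega) (by omega) hk.2 hc
      omega
  · intro i _ hi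
    refine Finset.sum_eq_zero fun k hk => ?_
    rw [Finset.mem_Icc] at hk
    rw [if_neg]
    intro hc
    have := eps_inj r (i0.1 + 1) b (i.1 + 1) k (by omega) (by omega) hb
      (by omega) (by omega) hk.2 hc
    exact hi (Fin.ext (by omega))
  · intro h
    exact absurd (Finset.mem_univ _) h
/-- multiplicities extracted from a Kostant partition -/
def ellOfA (c : {v // v ∈ posRootsEpsA r} → ℕ) : Fin r → ℕ → ℕ :=
  fun i k => if h : i.1 + 2 ≤ k ∧ k ≤ r + 1 then
    c ⟨epsRootA r (i.1 + 1) k, mem_eps r i k h.1 h.2⟩ else 0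

/-- Kostant partition extracted from a tableau -/
def cOfA (T : TabA r) : {v // v ∈ posRootsEpsA r} → ℕ :=
  fun α => ∑ i : Fin r, ∑ k ∈ Finset.Icc (i.1 + 2) (r + 1),
    if α.1 = epsRootA r (i.1 + 1) k then ellA r T i k else 0

lemma sum_c_smul (c : {v // v ∈ posRootsEpsA r} → ℕ) :
    (∑ α : {v // v ∈ posRootsEpsA r}, c α • α.1)
      = ∑ i : Fin r, ∑ k ∈ Finset.Icc (i.1 + 2) (r + 1),
          ellOfA r c i k • epsRootA r (i.1 + 1) k := by
  have h1 : (∑ α : {v // v ∈ posRootsEpsA r}, c α • α.1)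
      = ∑ α : {v // v ∈ posRootsEpsA r},
          (if h : α.1 ∈ posRootsEpsA r then c ⟨α.1, h⟩ else 0) • α.1 :=
    Finset.sum_congr rfl fun α _ => by rw [dif_pos α.2, Subtype.coe_eta]
  rw [h1, sum_pos_roots r (fun v => (if h : v ∈ posRootsEpsA r then c ⟨v, h⟩ else 0) • v)]
  refine Finset.sum_congr rfl fun i _ => Finset.sum_congr rfl fun k hk => ?_
  rw [Finset.mem_Icc] at hk
  rw [dif_pos (mem_eps r i k hk.1 hk.2), ellOfA, dif_pos (⟨hk.1, hk.2⟩ : _ ∧ _)]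

lemma sum_c_tot (c : {v // v ∈ posRootsEpsA r} → ℕ) :
    (∑ α : {v // v ∈ posRootsEpsA r}, c α)
      = ∑ i : Fin r, ∑ k ∈ Finset.Icc (i.1 + 2) (r + 1), ellOfA r c i k := by
  have h1 : (∑ α : {v // v ∈ posRootsEpsA r}, c α)
      = ∑ α : {v // v ∈ posRootsEpsA r},
          (if h : α.1 ∈ posRootsEpsA r then c ⟨α.1, h⟩ else 0) :=
    Finset.sum_congr rfl fun α _ => by rw [dif_pos α.2, Subtype.coe_eta]
  rw [h1, sum_pos_roots r (fun v => if h : v ∈ posRootsEpsA r then c ⟨v, h⟩ else 0)]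
  refine Finset.sum_congr rfl fun i _ => Finset.sum_congr rfl fun k hk => ?_
  rw [Finset.mem_Icc] at hk
  rw [dif_pos (mem_eps r i k hk.1 hk.2), ellOfA, dif_pos (⟨hk.1, hk.2⟩ : _ ∧ _)]

lemma ellOf_cOf (T : TabA r) (i : Fin r) (k : ℕ) (h1 : i.1 + 2 ≤ k) (h2 : k ≤ r + 1) :
    ellOfA r (cOfA r T) i k = ellA r T i k := by
  rw [ellOfA, dif_pos (⟨h1, h2⟩ : _ ∧ _)]
  exact sum_single_eps r (fun i k => ellA r T i k) i k h1 h2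

lemma negwt_eq (T : TabA r) : negwtEpsA r T
    = ∑ i : Fin r, ∑ k ∈ Finset.Icc (i.1 + 2) (r + 1),
        ellA r T i k • epsRootA r (i.1 + 1) k := rfl

lemma size_eq (T : TabA r) : sizeA r T
    = ∑ i : Fin r, ∑ k ∈ Finset.Icc (i.1 + 2) (r + 1), ellA r T i k := rfl

/-- the central bijection between Kostant partitions and marginally large
tableaux with prescribed weight and size -/
def mainEquiv (ν : Fin (r + 1) → ℤ) (d : ℕ) :
    {c : {v // v ∈ posRootsEpsA r} → ℕ //
        (∑ α : {v // v ∈ posRootsEpsA r}, c α • α.1) = ν ∧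
        (∑ α : {v // v ∈ posRootsEpsA r}, c α) = d}
      ≃ {T : TabA r // negwtEpsA r T = ν ∧ sizeA r T = d} where
  toFun := fun ⟨c, hc1, hc2⟩ => ⟨buildTabA r (ellOfA r c), by
    constructor
    · rw [← hc1, sum_c_smul, negwt_eq]
      refine Finset.sum_congr rfl fun i _ => Finset.sum_congr rfl fun k hk => ?_
      rw [Finset.mem_Icc] at hk
      rw [ell_build r _ i k hk.1 hk.2]
    · rw [← hc2, sum_c_tot, size_eq]
      refine Finset.sum_congr rfl fun i _ => Finset.sum_congr rfl fun k hk => ?_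
      rw [Finset.mem_Icc] at hk
      rw [ell_build r _ i k hk.1 hk.2]⟩
  invFun := fun ⟨T, h1, h2⟩ => ⟨cOfA r T, by
    constructor
    · rw [sum_c_smul, ← h1, negwt_eq]
      refine Finset.sum_congr rfl fun i _ => Finset.sum_congr rfl fun k hk => ?_
      rw [Finset.mem_Icc] at hk
      rw [ellOf_cOf r T i k hk.1 hk.2]
    · rw [sum_c_tot, ← h2, size_eq]
      refine Finset.sum_congr rfl fun i _ => Finset.sum_congr rfl fun k hk => ?_
      rw [Finset.mem_Icc] at hk
      rw [ellOf_cOf r T i k hk.1 hk.2]⟩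
  left_inv := by
    rintro ⟨c, hc1, hc2⟩
    apply Subtype.ext
    funext α
    show cOfA r (buildTabA r (ellOfA r c)) α = c α
    obtain ⟨i0, b, hb1, hb2, hval⟩ := mem_eps_exists r α.2
    have hstep : cOfA r (buildTabA r (ellOfA r c)) α
        = ∑ i : Fin r, ∑ k ∈ Finset.Icc (i.1 + 2) (r + 1),
            if α.1 = epsRootA r (i.1 + 1) k then ellOfA r c i k else 0 := by
      refine Finset.sum_congr rfl fun i _ => Finset.sum_congr rfl fun k hk => ?_
      rw [Finset.mem_Icc] at hk
      rw [ell_build r _ i k hk.1 hk.2]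
    rw [hstep]
    simp only [hval]
    rw [sum_single_eps r (ellOfA r c) i0 b hb1 hb2, ellOfA, dif_pos (⟨hb1, hb2⟩ : _ ∧ _)]
    exact congrArg c (Subtype.ext hval.symm)
  right_inv := by
    rintro ⟨T, hT1, hT2⟩
    apply Subtype.ext
    show buildTabA r (ellOfA r (cOfA r T)) = T
    rw [buildTabA_congr r (g' := fun i k => ellA r T i k)
      (fun i k h1 h2 => ellOf_cOf r T i k h1 h2)]
    exact build_eq r T

end Build

/-- for dominant integral weights `λ, μ` of type `A_r` (given by
weakly decreasing `ε`-coordinates), the Kostka–Foulkes polynomial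
`K_{λ,μ}(q) = Σ_{w∈W} (-1)^{ℓ(w)} 𝒫(w(λ+ρ)-(μ+ρ); q)` satisfies
`K_{λ,μ}(q) = Σ_{w∈W} (-1)^{ℓ(w)} Σ_{T ∈ 𝒯(∞), -wt(T) = w(λ+ρ)-(μ+ρ)} q^{|T|}`,
stated coefficientwise in `q`. -/
theorem stmt15 (r : ℕ) (hr : 1 ≤ r) (lam mu : Fin (r + 1) → ℤ)
    (hlam : Antitone lam) (hmu : Antitone mu) :
    ∀ d : ℕ,
      (∑ w : Equiv.Perm (Fin (r + 1)), (-1 : ℤ) ^ lenA r w *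
        Nat.card {c : {v // v ∈ posRootsEpsA r} → ℕ //
          (∑ α : {v // v ∈ posRootsEpsA r}, c α • α.1) = shiftA r w lam mu ∧
          (∑ α : {v // v ∈ posRootsEpsA r}, c α) = d})
      = ∑ w : Equiv.Perm (Fin (r + 1)), (-1 : ℤ) ^ lenA r w *
          Nat.card {T : TabA r //
            negwtEpsA r T = shiftA r w lam mu ∧ sizeA r T = d} := by
  intro d
  refine Finset.sum_congr rfl fun w _ => ?_
  rw [Nat.card_congr (mainEquiv r (shiftA r w lam mu) d)]
end
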